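/- arXiv:math/0409139 — 3 statements merged into one kernel-verified Lean document; each statement's English description precedes it below -/
import Mathlib

section
/- Let f = (f_n) be a martingale on a probability space bounded in L¹, and let S(f) = (Σ_{n≥1} |f_n - f_{n-1}|²)^{1/2} be its square function (with f_0 = 0). Then there exists an absolute constant M > 0 such that for every λ > 0, λ · P(S(f) > λ) ≤ M · sup_n E|f_n|. -/
open MeasureTheory Filter

section BellmanAux

/-- Bellman-type function for the weak (1,1) inequality for the square function. -/
noncomputable def burkPsi (x t : ℝ) : ℝ :=
  if t ≤ x ^ 2 then |x| else (x ^ 2 + t) / (2 * Real.sqrt t)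

/-- The "derivative" used in the tangent inequality. -/
noncomputable def burkSg (x t : ℝ) : ℝ :=
  if t ≤ x ^ 2 then (if 0 ≤ x then 1 else -1) else x / Real.sqrt t

lemma burkPsi_ge (x t : ℝ) : |x| ≤ burkPsi x t := by
  unfold burkPsi
  split
  · exact le_rfl
  · rename_i h
    push_neg at h
    have ht : 0 < t := lt_of_le_of_lt (sq_nonneg x) h
    have hr : Real.sqrt t ^ 2 = t := Real.sq_sqrt ht.le
    have hrpos : 0 < Real.sqrt t := Real.sqrt_pos.2 ht
    rw [le_div_iff₀ (by positivity)]
    nlinarith [sq_nonneg (|x| - Real.sqrt t), sq_abs x]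

lemma burkPsi_nonneg (x t : ℝ) : 0 ≤ burkPsi x t :=
  le_trans (abs_nonneg x) (burkPsi_ge x t)

lemma burkPsi_le (x t : ℝ) (ht : t ≤ 1) : burkPsi x t ≤ |x| + 1 / 2 := by
  unfold burkPsi
  split
  · linarith [abs_nonneg x]
  · rename_i h
    push_neg at h
    have ht0 : 0 < t := lt_of_le_of_lt (sq_nonneg x) h
    have hr : Real.sqrt t ^ 2 = t := Real.sq_sqrt ht0.le
    have hrpos : 0 < Real.sqrt t := Real.sqrt_pos.2 ht0
    have hr1 : Real.sqrt t ≤ 1 := Real.sqrt_le_one.mpr ht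
    have hxr : |x| < Real.sqrt t := by
      nlinarith [sq_abs x, abs_nonneg x]
    rw [div_le_iff₀ (by positivity)]
    nlinarith [abs_nonneg x, sq_abs x]

lemma burkSg_abs_le (x t : ℝ) : |burkSg x t| ≤ 1 := by
  unfold burkSg
  split
  · split <;> simp
  · rename_i h
    push_neg at h
    have ht0 : 0 < t := lt_of_le_of_lt (sq_nonneg x) h
    have hr : Real.sqrt t ^ 2 = t := Real.sq_sqrt ht0.le
    have hrpos : 0 < Real.sqrt t := Real.sqrt_pos.2 ht0
    have hxr : |x| ≤ Real.sqrt t := by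
      nlinarith [sq_abs x, abs_nonneg x]
    rw [abs_div, abs_of_nonneg hrpos.le, div_le_one hrpos]
    exact hxr

/-- The key tangent ("parabolic concavity") inequality. -/
lemma burkPsi_tangent (x t d : ℝ) :
    burkPsi x t + burkSg x t * d ≤ burkPsi (x + d) (t - d ^ 2) := by
  by_cases h : t ≤ x ^ 2
  · -- start "outer": Ψ = |x|, slope ±1
    have h1 : burkPsi x t = |x| := by unfold burkPsi; simp [h]
    have h2 : |x| + burkSg x t * d ≤ |x + d| := by
      unfold burkSg
      simp only [h, if_true]
      split
      · rename_i hx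
        have : x + d ≤ |x + d| := le_abs_self _
        rw [abs_of_nonneg hx] at *
        linarith
      · rename_i hx
        push_neg at hx
        have : -(x + d) ≤ |x + d| := neg_le_abs _
        rw [abs_of_neg hx]
        linarith
    calc burkPsi x t + burkSg x t * d ≤ |x + d| := by rw [h1]; exact h2
      _ ≤ burkPsi (x + d) (t - d ^ 2) := burkPsi_ge _ _
  · -- start "inner"
    push_neg at h
    have ht0 : 0 < t := lt_of_le_of_lt (sq_nonneg x) h
    set r : ℝ := Real.sqrt t with hrdef
    have hr : r ^ 2 = t := Real.sq_sqrt ht0.le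
    have hrpos : 0 < r := Real.sqrt_pos.2 ht0
    have hxr : |x| < r := by nlinarith [sq_abs x, abs_nonneg x]
    have hP : burkPsi x t = (x ^ 2 + t) / (2 * r) := by
      unfold burkPsi; simp [not_le.2 h, hrdef]
    have hS : burkSg x t = x / r := by
      unfold burkSg; simp [not_le.2 h, hrdef]
    have hLHS : burkPsi x t + burkSg x t * d = ((x + d) ^ 2 + (t - d ^ 2)) / (2 * r) := by
      rw [hP, hS]
      field_simp
      ring
    by_cases hT : t - d ^ 2 ≤ (x + d) ^ 2
    · -- target "outer": Ψ(x+d, t-d²) = |x+d|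
      have hPT : burkPsi (x + d) (t - d ^ 2) = |x + d| := by
        unfold burkPsi; simp [hT]
      rw [hLHS, hPT, div_le_iff₀ (by positivity)]
      set A := |x + d| with hA
      have hA0 : 0 ≤ A := abs_nonneg _
      have hA2 : A ^ 2 = (x + d) ^ 2 := sq_abs _
      have hAle : A ≤ |x| + |d| := abs_add_le _ _
      have hdle : d ≤ |d| := le_abs_self d
      have hdge : -|d| ≤ d := neg_abs_le d
      have hd2 : |d| ^ 2 = d ^ 2 := sq_abs d
      -- need: (x+d)² + (t - d²) ≤ 2 r A, i.e. d² ≥ (A - r)²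
      rcases le_or_gt (r - |d|) A with hc | hc
      · nlinarith [abs_nonneg d]
      · -- then A² < (r - |d|)² while A² ≥ t - d² = (r-|d|)(r+|d|) : contradiction-ish
        exfalso
        have h1 : A ^ 2 < (r - |d|) ^ 2 := by nlinarith [abs_nonneg d]
        nlinarith [abs_nonneg d]
    · -- target "inner"
      push_neg at hT
      have ht'0 : 0 < t - d ^ 2 := lt_of_le_of_lt (sq_nonneg _) hT
      set r' : ℝ := Real.sqrt (t - d ^ 2) with hr'def
      have hr' : r' ^ 2 = t - d ^ 2 := Real.sq_sqrt ht'0.le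
      have hr'pos : 0 < r' := Real.sqrt_pos.2 ht'0
      have hr'le : r' ≤ r := Real.sqrt_le_sqrt (by nlinarith [sq_nonneg d])
      have hPT : burkPsi (x + d) (t - d ^ 2) = ((x + d) ^ 2 + (t - d ^ 2)) / (2 * r') := by
        unfold burkPsi; simp [not_le.2 hT, hr'def]
      rw [hLHS, hPT]
      have hC : 0 ≤ (x + d) ^ 2 + (t - d ^ 2) := by positivity
      rw [div_le_div_iff₀ (by positivity) (by positivity)]
      nlinarith [mul_le_mul_of_nonneg_left hr'le hC]

lemma measurable_burkPsi : Measurable fun p : ℝ × ℝ => burkPsi p.1 p.2 := by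
  unfold burkPsi
  refine Measurable.ite ?_ ?_ ?_
  · exact measurableSet_le measurable_snd ((measurable_fst.pow_const 2))
  · exact measurable_fst.abs
  · exact ((measurable_fst.pow_const 2).add measurable_snd).div
      ((Real.continuous_sqrt.measurable.comp measurable_snd).const_mul 2)

lemma measurable_burkSg : Measurable fun p : ℝ × ℝ => burkSg p.1 p.2 := by
  unfold burkSg
  refine Measurable.ite ?_ ?_ ?_
  · exact measurableSet_le measurable_snd ((measurable_fst.pow_const 2))
  · exact Measurable.ite (measurableSet_le measurable_const measurable_fst)
      measurable_const measurable_const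
  · exact measurable_fst.div (Real.continuous_sqrt.measurable.comp measurable_snd)

/-- Bellman function in the `(x, y)` coordinates. -/
noncomputable def burkU (x y : ℝ) : ℝ := 1 - 2 * burkPsi x (1 - y)

noncomputable def burkV (x y : ℝ) : ℝ := -(2 * burkSg x (1 - y))

lemma burkU_tangent (x y d : ℝ) :
    burkU (x + d) (y + d ^ 2) ≤ burkU x y + burkV x y * d := by
  unfold burkU burkV
  have h := burkPsi_tangent x (1 - y) d
  have : (1 : ℝ) - (y + d ^ 2) = 1 - y - d ^ 2 := by ring
  rw [this]
  nlinarith [h]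

lemma burkU_abs_le (x y : ℝ) (hy : 0 ≤ y) : |burkU x y| ≤ 2 * |x| + 2 := by
  unfold burkU
  have h1 := burkPsi_nonneg x (1 - y)
  have h2 := burkPsi_le x (1 - y) (by linarith)
  rw [abs_le]
  constructor <;> nlinarith [abs_nonneg x]

lemma burkV_abs_le (x y : ℝ) : |burkV x y| ≤ 2 := by
  unfold burkV
  have := burkSg_abs_le x (1 - y)
  rw [abs_neg, abs_mul, abs_two]
  linarith

lemma burkU_zero : burkU 0 0 = 0 := by
  unfold burkU burkPsi
  norm_num

lemma indicator_le_burkU (x y : ℝ) (hy : 0 ≤ y) :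
    Set.indicator {z : ℝ | 1 ≤ z} (fun _ => (1 : ℝ)) y ≤ burkU x y + 2 * |x| := by
  by_cases h : 1 ≤ y
  · have hout : burkPsi x (1 - y) = |x| := by
      unfold burkPsi
      have : 1 - y ≤ x ^ 2 := le_trans (by linarith) (sq_nonneg x)
      simp [this]
    rw [Set.indicator_of_mem (by exact h)]
    unfold burkU
    rw [hout]
    ring_nf
    linarith
  · rw [Set.indicator_of_notMem (by exact h)]
    unfold burkU
    have h2 := burkPsi_le x (1 - y) (by linarith)
    nlinarith [abs_nonneg x]

end BellmanAux

/-- Key per-time inequality: `μ(S_N² ≥ 1) ≤ 2 E|f_N|`. -/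
lemma burk_key {Ω : Type} {m0 : MeasurableSpace Ω} {μ : Measure Ω} [IsProbabilityMeasure μ]
    {ℱ : Filtration ℕ m0} {f : ℕ → Ω → ℝ} (hf : Martingale f ℱ μ) (h0 : f 0 = 0) (N : ℕ) :
    (μ {ω | 1 ≤ ∑ k ∈ Finset.range N, (f (k + 1) ω - f k ω) ^ 2}).toReal
      ≤ 2 * ∫ ω, |f N ω| ∂μ := by
  classical
  set g : ℕ → Ω → ℝ := fun n ω => ∑ k ∈ Finset.range n, (f (k + 1) ω - f k ω) ^ 2 with hg
  have hgnn : ∀ n ω, 0 ≤ g n ω := fun n ω =>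
    Finset.sum_nonneg fun k _ => sq_nonneg _
  have hfsm : ∀ n, StronglyMeasurable[m0] (f n) := fun n =>
    (hf.stronglyAdapted n).mono (ℱ.le n)
  have hgm : ∀ n, Measurable (g n) := by
    intro n
    apply Finset.measurable_sum
    intro k _
    exact ((hfsm (k + 1)).measurable.sub (hfsm k).measurable).pow_const 2
  -- strong measurability of f k, g n w.r.t. ℱ n for k ≤ n
  have hfsm' : ∀ k n, k ≤ n → StronglyMeasurable[ℱ n] (f k) := fun k n hk =>
    (hf.stronglyAdapted k).mono (ℱ.mono hk)
  have hgm' : ∀ n, Measurable[ℱ n] (g n) := by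
    intro n
    apply Finset.measurable_sum
    intro k hk
    have hk' : k + 1 ≤ n := Finset.mem_range.mp hk
    exact ((hfsm' (k + 1) n hk').measurable.sub
      (hfsm' k n (le_trans (Nat.le_succ k) hk')).measurable).pow_const 2
  set Un : ℕ → Ω → ℝ := fun n ω => burkU (f n ω) (g n ω) with hUn
  set Vn : ℕ → Ω → ℝ := fun n ω => burkV (f n ω) (g n ω) with hVn
  have hUnm : ∀ n, AEStronglyMeasurable (Un n) μ := by
    intro n
    have : Measurable fun ω => burkU (f n ω) (g n ω) := by
      have : (fun ω => burkU (f n ω) (g n ω)) =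
          (fun p : ℝ × ℝ => 1 - 2 * burkPsi p.1 p.2) ∘ fun ω => (f n ω, 1 - g n ω) := by
        funext ω; simp [burkU]
      rw [this]
      exact (measurable_const.sub (measurable_burkPsi.const_mul 2)).comp
        (((hfsm n).measurable).prodMk (measurable_const.sub (hgm n)))
    exact this.aestronglyMeasurable
  have hUnint : ∀ n, Integrable (Un n) μ := by
    intro n
    refine Integrable.mono' (((hf.integrable n).abs.const_mul 2).add (integrable_const 2))
      (hUnm n) ?_
    filter_upwards with ω
    simpa [Real.norm_eq_abs] using burkU_abs_le (f n ω) (g n ω) (hgnn n ω)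
  -- the martingale step
  have hstep : ∀ n, ∫ ω, Un (n + 1) ω ∂μ ≤ ∫ ω, Un n ω ∂μ := by
    intro n
    set D : Ω → ℝ := fun ω => f (n + 1) ω - f n ω with hD
    have hDint : Integrable D μ := (hf.integrable (n + 1)).sub (hf.integrable n)
    have hVnsm : StronglyMeasurable[ℱ n] (Vn n) := by
      have h1 : Measurable[ℱ n] fun ω => burkSg (f n ω) (1 - g n ω) :=
        measurable_burkSg.comp
          ((hfsm' n n le_rfl).measurable.prodMk (measurable_const.sub (hgm' n)))
      exact ((h1.const_mul 2).neg).stronglyMeasurable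
    have hVbd : ∀ᵐ ω ∂μ, ‖Vn n ω‖ ≤ 2 := by
      filter_upwards with ω
      simpa [Real.norm_eq_abs] using burkV_abs_le (f n ω) (g n ω)
    have hVDint : Integrable (Vn n * D) μ :=
      hDint.bdd_mul ((hVnsm.mono (ℱ.le n)).aestronglyMeasurable) hVbd
    -- E[Vn * D] = 0
    have hcond : μ[D | ℱ n] =ᵐ[μ] 0 := by
      have h1 : μ[D | ℱ n] =ᵐ[μ] μ[f (n + 1) | ℱ n] - μ[f n | ℱ n] :=
        condExp_sub (hf.integrable (n + 1)) (hf.integrable n) _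
      have h2 : μ[f (n + 1) | ℱ n] =ᵐ[μ] f n := hf.condExp_ae_eq (Nat.le_succ n)
      have h3 : μ[f n | ℱ n] =ᵐ[μ] f n := hf.condExp_ae_eq le_rfl
      filter_upwards [h1, h2, h3] with ω e1 e2 e3
      simp [e1, e2, e3]
    have hpull : μ[Vn n * D | ℱ n] =ᵐ[μ] Vn n * μ[D | ℱ n] :=
      condExp_stronglyMeasurable_mul_of_bound (ℱ.le n) hVnsm hDint 2 hVbd
    have hzero : ∫ ω, Vn n ω * D ω ∂μ = 0 := by
      have h1 : ∫ ω, Vn n ω * D ω ∂μ = ∫ ω, (μ[Vn n * D | ℱ n]) ω ∂μ :=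
        (integral_condExp (ℱ.le n)).symm
      rw [h1]
      have h2 : μ[Vn n * D | ℱ n] =ᵐ[μ] 0 := by
        filter_upwards [hpull, hcond] with ω e1 e2
        simp [e1, Pi.mul_apply, e2]
      rw [integral_congr_ae h2]
      simp
    have hpt : ∀ ω, Un (n + 1) ω ≤ Un n ω + Vn n ω * D ω := by
      intro ω
      have hfs : f (n + 1) ω = f n ω + D ω := by simp [hD]
      have hgs : g (n + 1) ω = g n ω + D ω ^ 2 :=
        Finset.sum_range_succ _ _
      calc Un (n + 1) ω = burkU (f n ω + D ω) (g n ω + D ω ^ 2) := by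
            show burkU (f (n + 1) ω) (g (n + 1) ω) = _
            rw [hfs, hgs]
        _ ≤ burkU (f n ω) (g n ω) + burkV (f n ω) (g n ω) * D ω := burkU_tangent _ _ _
        _ = Un n ω + Vn n ω * D ω := rfl
    calc ∫ ω, Un (n + 1) ω ∂μ ≤ ∫ ω, (Un n ω + Vn n ω * D ω) ∂μ :=
          integral_mono (hUnint (n + 1)) ((hUnint n).add hVDint) hpt
      _ = ∫ ω, Un n ω ∂μ + ∫ ω, Vn n ω * D ω ∂μ := integral_add (hUnint n) hVDint
      _ = ∫ ω, Un n ω ∂μ := by rw [hzero]; ring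
  have hbase : ∫ ω, Un 0 ω ∂μ = 0 := by
    have : ∀ ω, Un 0 ω = 0 := by
      intro ω
      have hf0 : f 0 ω = 0 := by rw [h0]; rfl
      have hg0 : g 0 ω = 0 := by simp [hg]
      show burkU (f 0 ω) (g 0 ω) = 0
      rw [hf0, hg0, burkU_zero]
    simp only [this, integral_zero]
  have hUneg : ∀ n, ∫ ω, Un n ω ∂μ ≤ 0 := by
    intro n
    induction n with
    | zero => rw [hbase]
    | succ k ih => exact le_trans (hstep k) ih
  -- conclude via the indicator bound
  have hAmeas : MeasurableSet {ω | 1 ≤ g N ω} :=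
    measurableSet_le measurable_const (hgm N)
  have hind : (μ {ω | 1 ≤ g N ω}).toReal
      = ∫ ω, Set.indicator {ω | 1 ≤ g N ω} (1 : Ω → ℝ) ω ∂μ :=
    (integral_indicator_one hAmeas).symm
  have hptind : ∀ ω, Set.indicator {ω | 1 ≤ g N ω} (1 : Ω → ℝ) ω
      ≤ Un N ω + 2 * |f N ω| := by
    intro ω
    have h := indicator_le_burkU (f N ω) (g N ω) (hgnn N ω)
    by_cases hmem : 1 ≤ g N ω
    · rw [Set.indicator_of_mem (by exact hmem), Pi.one_apply]
      rw [Set.indicator_of_mem (by exact hmem)] at h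
      exact h
    · rw [Set.indicator_of_notMem (by exact hmem)]
      rw [Set.indicator_of_notMem (by exact hmem)] at h
      exact h
  have hindint : Integrable (Set.indicator {ω | 1 ≤ g N ω} (1 : Ω → ℝ)) μ := by
    refine Integrable.indicator (integrable_const 1) hAmeas
  have habsint : Integrable (fun ω => |f N ω|) μ := (hf.integrable N).abs
  calc (μ {ω | 1 ≤ g N ω}).toReal
      = ∫ ω, Set.indicator {ω | 1 ≤ g N ω} (1 : Ω → ℝ) ω ∂μ := hind
    _ ≤ ∫ ω, (Un N ω + 2 * |f N ω|) ∂μ :=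
        integral_mono hindint ((hUnint N).add (habsint.const_mul 2)) hptind
    _ = ∫ ω, Un N ω ∂μ + 2 * ∫ ω, |f N ω| ∂μ := by
        rw [integral_add (hUnint N) (habsint.const_mul 2), integral_const_mul]
    _ ≤ 2 * ∫ ω, |f N ω| ∂μ := by linarith [hUneg N]

/-- Burkholder's weak-type (1,1) inequality for the martingale square function:
there is an absolute constant `M > 0` such that for every martingale `f` (with
`f 0 = 0`) on a probability space which is bounded in `L¹`, and every `λ > 0`,
`λ · P(S(f) > λ) ≤ M · sup_n E|f_n|`, where
`S(f) = (Σ_n |f_{n+1} - f_n|²)^{1/2}`. -/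
theorem stmt_4 :
    ∃ M : ℝ, 0 < M ∧
      ∀ (Ω : Type) (m0 : MeasurableSpace Ω) (μ : Measure Ω), IsProbabilityMeasure μ →
        ∀ (ℱ : Filtration ℕ m0) (f : ℕ → Ω → ℝ), Martingale f ℱ μ →
          f 0 = 0 →
          BddAbove (Set.range fun n => ∫ ω, |f n ω| ∂μ) →
          ∀ l : ℝ, 0 < l →
            l * (μ {ω | l < Real.sqrt (∑' n : ℕ, (f (n + 1) ω - f n ω) ^ 2)}).toReal ≤
              M * ⨆ n : ℕ, ∫ ω, |f n ω| ∂μ := by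
  classical
  refine ⟨2, by norm_num, ?_⟩
  intro Ω m0 μ hprob ℱ f hf h0 hbdd l hl
  haveI := hprob
  set C : ℝ := ⨆ n : ℕ, ∫ ω, |f n ω| ∂μ with hC
  have hle : ∀ n, ∫ ω, |f n ω| ∂μ ≤ C := fun n => le_ciSup hbdd n
  have hC0 : 0 ≤ C := by
    have h00 : ∫ ω, |f 0 ω| ∂μ = 0 := by
      rw [h0]; simp
    linarith [hle 0]
  -- the scaled martingale
  set F : ℕ → Ω → ℝ := l⁻¹ • f with hF
  have hFmart : Martingale F ℱ μ := hf.smul l⁻¹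
  have hF0 : F 0 = 0 := by
    rw [hF]; funext ω; simp [h0]
  set G : ℕ → Ω → ℝ := fun n ω => ∑ k ∈ Finset.range n, (f (k + 1) ω - f k ω) ^ 2 with hG
  have hkey : ∀ N : ℕ, (μ {ω | l ^ 2 ≤ G N ω}).toReal ≤ 2 * l⁻¹ * C := by
    intro N
    have h := burk_key hFmart hF0 N
    have hset : {ω | 1 ≤ ∑ k ∈ Finset.range N, (F (k + 1) ω - F k ω) ^ 2}
        = {ω | l ^ 2 ≤ G N ω} := by
      ext ω
      simp only [Set.mem_setOf_eq, hF, Pi.smul_apply, smul_eq_mul, hG]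
      have hsum : ∑ k ∈ Finset.range N, (l⁻¹ * f (k + 1) ω - l⁻¹ * f k ω) ^ 2
          = l⁻¹ ^ 2 * ∑ k ∈ Finset.range N, (f (k + 1) ω - f k ω) ^ 2 := by
        rw [Finset.mul_sum]
        congr 1
        funext k
        ring
      rw [hsum]
      have hl2 : (0 : ℝ) < l ^ 2 := by positivity
      have heq : l⁻¹ ^ 2 * ∑ k ∈ Finset.range N, (f (k + 1) ω - f k ω) ^ 2
          = (∑ k ∈ Finset.range N, (f (k + 1) ω - f k ω) ^ 2) / l ^ 2 := by
        field_simp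
      rw [heq, le_div_iff₀ hl2, one_mul]
    have hint : ∫ ω, |F N ω| ∂μ = l⁻¹ * ∫ ω, |f N ω| ∂μ := by
      rw [hF]
      simp only [Pi.smul_apply, smul_eq_mul]
      rw [← integral_const_mul]
      congr 1
      funext ω
      rw [abs_mul, abs_of_nonneg (by positivity : (0:ℝ) ≤ l⁻¹)]
    rw [hset, hint] at h
    calc (μ {ω | l ^ 2 ≤ G N ω}).toReal ≤ 2 * (l⁻¹ * ∫ ω, |f N ω| ∂μ) := h
      _ ≤ 2 * l⁻¹ * C := by
          have := hle N
          have hlinv : (0:ℝ) ≤ l⁻¹ := by positivity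
          nlinarith
  -- monotonicity of the partial sums and the union bound
  have hGmono : ∀ ω, Monotone fun N => G N ω := by
    intro ω N M hNM
    exact Finset.sum_le_sum_of_subset_of_nonneg (Finset.range_subset_range.2 hNM)
      (fun k _ _ => sq_nonneg _)
  have hAmono : Monotone fun N => {ω | l ^ 2 ≤ G N ω} := by
    intro N M hNM ω hω
    exact le_trans hω (hGmono ω hNM)
  have hsubset : {ω | l < Real.sqrt (∑' n : ℕ, (f (n + 1) ω - f n ω) ^ 2)}
      ⊆ ⋃ N : ℕ, {ω | l ^ 2 ≤ G N ω} := by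
    intro ω hω
    simp only [Set.mem_setOf_eq] at hω
    have hs : l ^ 2 < ∑' n : ℕ, (f (n + 1) ω - f n ω) ^ 2 :=
      (Real.lt_sqrt hl.le).mp hω
    have hsumm : Summable fun n : ℕ => (f (n + 1) ω - f n ω) ^ 2 := by
      by_contra hns
      rw [tsum_eq_zero_of_not_summable hns] at hs
      nlinarith
    have htends : Tendsto (fun N => G N ω) atTop
        (nhds (∑' n : ℕ, (f (n + 1) ω - f n ω) ^ 2)) :=
      hsumm.hasSum.tendsto_sum_nat
    have hev : ∀ᶠ N in atTop, l ^ 2 < G N ω :=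
      htends.eventually (lt_mem_nhds hs)
    obtain ⟨N, hN⟩ := hev.exists
    exact Set.mem_iUnion.2 ⟨N, le_of_lt hN⟩
  have hmeasA : ∀ N, MeasurableSet {ω | l ^ 2 ≤ G N ω} := by
    intro N
    have hgm : Measurable (G N) := by
      apply Finset.measurable_sum
      intro k _
      exact ((((hf.stronglyAdapted (k+1)).mono (ℱ.le (k+1))).measurable).sub
        (((hf.stronglyAdapted k).mono (ℱ.le k)).measurable)).pow_const 2
    exact measurableSet_le measurable_const hgm
  have hbound : μ {ω | l < Real.sqrt (∑' n : ℕ, (f (n + 1) ω - f n ω) ^ 2)}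
      ≤ ENNReal.ofReal (2 * l⁻¹ * C) := by
    refine le_trans (measure_mono hsubset) ?_
    rw [(hAmono.directed_le).measure_iUnion]
    refine iSup_le fun N => ?_
    rw [ENNReal.le_ofReal_iff_toReal_le (measure_ne_top μ _) (mul_nonneg (by positivity) hC0)]
    exact hkey N
  have htoReal : (μ {ω | l < Real.sqrt (∑' n : ℕ, (f (n + 1) ω - f n ω) ^ 2)}).toReal
      ≤ 2 * l⁻¹ * C := by
    refine le_trans (ENNReal.toReal_mono (by simp) hbound) ?_
    rw [ENNReal.toReal_ofReal (mul_nonneg (by positivity) hC0)]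
  calc l * (μ {ω | l < Real.sqrt (∑' n : ℕ, (f (n + 1) ω - f n ω) ^ 2)}).toReal
      ≤ l * (2 * l⁻¹ * C) := by
        apply mul_le_mul_of_nonneg_left htoReal hl.le
    _ = 2 * C := by field_simp
end

section
/- Let A be an n×n complex matrix with positive semidefinite real part Re A = (A + A*)/2 ≥ 0, and let λ > 0. Then Re(A(λ·1 + A)⁻¹) ≥ (1/2)·(λ·1 + A*)⁻¹(|A|² + 2λ·Re A)(λ·1 + A)⁻¹, where |A|² = A*A. -/
open Matrix
open scoped ComplexOrder

lemma aux_isUnit {d : ℕ} (A : Matrix (Fin d) (Fin d) ℂ)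
    (hA : ((1 / 2 : ℂ) • (A + Aᴴ)).PosSemidef) (l : ℝ) (hl : 0 < l) :
    IsUnit ((l : ℂ) • 1 + A).det := by
  by_contra h
  rw [isUnit_iff_ne_zero, not_not] at h
  obtain ⟨v, hv, hv0⟩ := (Matrix.exists_mulVec_eq_zero_iff).2 h
  have h0 : star v ⬝ᵥ (((l : ℂ) • 1 + A) *ᵥ v) = 0 := by rw [hv0, dotProduct_zero]
  rw [add_mulVec, smul_mulVec, one_mulVec, dotProduct_add, dotProduct_smul] at h0
  have hconj : star v ⬝ᵥ (Aᴴ *ᵥ v) = star (star v ⬝ᵥ (A *ᵥ v)) := by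
    rw [star_dotProduct]
    congr 1
    rw [star_mulVec, conjTranspose_conjTranspose, dotProduct_mulVec]
  have hs : 0 ≤ (star v ⬝ᵥ (A *ᵥ v)).re := by
    have h2 := hA.dotProduct_mulVec_nonneg v
    rw [smul_mulVec, dotProduct_smul, add_mulVec, dotProduct_add, hconj] at h2
    have h3 := (Complex.le_def.1 h2).1
    simp [Complex.add_re, Complex.conj_re] at h3
    linarith
  have ht : 0 < (star v ⬝ᵥ v).re := by
    have h4 : 0 ≤ star v ⬝ᵥ v := dotProduct_star_self_nonneg v
    have h5 : star v ⬝ᵥ v ≠ 0 := fun hc => hv (dotProduct_star_self_eq_zero.1 hc)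
    have := Complex.le_def.1 h4
    rcases lt_or_eq_of_le this.1 with h6 | h6
    · simpa using h6
    · exfalso; exact h5 (Complex.ext h6.symm (by simpa using this.2.symm))
  have him : (star v ⬝ᵥ v).im = 0 := by
    have := (Complex.le_def.1 (dotProduct_star_self_nonneg v)).2
    simpa using this.symm
  have hre := congrArg Complex.re h0
  rw [smul_eq_mul] at hre
  simp only [Complex.add_re, Complex.mul_re, Complex.ofReal_re, Complex.ofReal_im, Complex.zero_re, him] at hre
  nlinarith

/-- If `Re A = (A + A*)/2 ≥ 0` and `λ > 0`, then
`Re(A(λ·1 + A)⁻¹) ≥ (1/2)·(λ·1 + A*)⁻¹ (|A|² + 2λ·Re A) (λ·1 + A)⁻¹`. -/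
theorem stmt_14 {d : ℕ} (A : Matrix (Fin d) (Fin d) ℂ)
    (hA : ((1 / 2 : ℂ) • (A + Aᴴ)).PosSemidef) (l : ℝ) (hl : 0 < l) :
    ((1 / 2 : ℂ) • (A * ((l : ℂ) • 1 + A)⁻¹ + (A * ((l : ℂ) • 1 + A)⁻¹)ᴴ) -
      (1 / 2 : ℂ) • (((l : ℂ) • 1 + Aᴴ)⁻¹ *
        (Aᴴ * A + (2 * (l : ℂ)) • ((1 / 2 : ℂ) • (A + Aᴴ))) *
        ((l : ℂ) • 1 + A)⁻¹)).PosSemidef := by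
  set B : Matrix (Fin d) (Fin d) ℂ := (l : ℂ) • 1 + A with hB
  set C : Matrix (Fin d) (Fin d) ℂ := B⁻¹ with hC
  have hdet : IsUnit B.det := aux_isUnit A hA l hl
  have hBH : Bᴴ = (l : ℂ) • 1 + Aᴴ := by
    rw [hB, conjTranspose_add, conjTranspose_smul, conjTranspose_one, Complex.star_def,
      Complex.conj_ofReal]
  have h1 : B * C = 1 := Matrix.mul_nonsing_inv B hdet
  have h2 : C * B = 1 := Matrix.nonsing_inv_mul B hdet
  have hCH : ((l : ℂ) • 1 + Aᴴ)⁻¹ = Cᴴ := by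
    rw [← hBH, ← Matrix.conjTranspose_nonsing_inv]
  have u1 : Cᴴ * Bᴴ = 1 := by rw [← conjTranspose_mul, h1, conjTranspose_one]
  have hX : A * C = 1 - (l : ℂ) • C := by
    have hA' : A = B - (l : ℂ) • 1 := by rw [hB, add_sub_cancel_left]
    rw [hA', Matrix.sub_mul, h1, Matrix.smul_mul, Matrix.one_mul]
  have hXH : (A * C)ᴴ = 1 - (l : ℂ) • Cᴴ := by
    rw [hX, conjTranspose_sub, conjTranspose_one, conjTranspose_smul, Complex.star_def,
      Complex.conj_ofReal]
  have hmid : Aᴴ * A + (2 * (l : ℂ)) • ((1 / 2 : ℂ) • (A + Aᴴ)) =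
      Bᴴ * B - ((l : ℂ) * (l : ℂ)) • 1 := by
    rw [hBH, hB, smul_smul, show (2 * (l : ℂ)) * (1 / 2) = (l : ℂ) by ring]
    rw [Matrix.add_mul, Matrix.mul_add, Matrix.mul_add, Matrix.smul_mul, Matrix.mul_smul,
      Matrix.mul_smul, Matrix.smul_mul, Matrix.one_mul, Matrix.mul_one, smul_smul, smul_add]
    simp only [Matrix.one_mul]
    abel
  have hCBBC : Cᴴ * (Bᴴ * B - ((l : ℂ) * (l : ℂ)) • 1) * C =
      1 - ((l : ℂ) * (l : ℂ)) • (Cᴴ * C) := by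
    rw [Matrix.mul_sub, Matrix.sub_mul, Matrix.mul_smul, Matrix.mul_one, Matrix.smul_mul,
      Matrix.mul_assoc, Matrix.mul_assoc, h1, Matrix.mul_one, u1]
  have key : ((1 / 2 : ℂ) • (A * C + (A * C)ᴴ) -
      (1 / 2 : ℂ) • (Cᴴ * (Aᴴ * A + (2 * (l : ℂ)) • ((1 / 2 : ℂ) • (A + Aᴴ))) * C)) =
      (1 / 2 : ℂ) • ((A * C)ᴴ * (A * C)) := by
    rw [hmid, hCBBC, hXH, hX]
    simp only [Matrix.sub_mul, Matrix.mul_sub, Matrix.one_mul, Matrix.mul_one,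
      Matrix.smul_mul, Matrix.mul_smul, smul_smul]
    module
  rw [hCH, key]
  have hrw : (1 / 2 : ℂ) • ((A * C)ᴴ * (A * C)) =
      ((((Real.sqrt 2⁻¹ : ℝ) : ℂ) • (A * C))ᴴ * (((Real.sqrt 2⁻¹ : ℝ) : ℂ) • (A * C))) := by
    rw [conjTranspose_smul, Matrix.smul_mul, Matrix.mul_smul, smul_smul, Complex.star_def,
      Complex.conj_ofReal, ← Complex.ofReal_mul, Real.mul_self_sqrt (by norm_num)]
    norm_num
  rw [hrw]
  exact posSemidef_conjTranspose_mul_self _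
end

section
/- Let (x_n)_{n=1}^N be a finite martingale of positive semidefinite matrices in (M_d(ℂ), τ) with conditional expectations E_n onto subalgebras M_n, and let (q_n) be projections with q_n ∈ M_n, q_n ≤ q_{n-1}, q_n commuting with q_{n-1} x_n q_{n-1}, and q_{n-1} x_{n-1} q_{n-1} ≤ λ q_{n-1}. Then Σ_{n=2}^N τ((q_{n-1} - q_n)(x_n - x_{n-1})(q_{n-1} - q_n)) ≤ τ(q_1 x_1 q_1 - q_N x_N q_N) ≤ τ((q_1 - q_N) x_N). -/
open Matrix
open scoped ComplexOrder

lemma aux_trace_psd_nonneg {d : ℕ} {M : Matrix (Fin d) (Fin d) ℂ} (hM : M.PosSemidef) :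
    0 ≤ M.trace := by
  exact hM.trace_nonneg

open scoped MatrixOrder Matrix.Norms.L2Operator in
lemma aux_trace_mul_nonneg {d : ℕ} {A B : Matrix (Fin d) (Fin d) ℂ}
    (hA : A.PosSemidef) (hB : B.PosSemidef) : 0 ≤ (A * B).trace := by
  obtain ⟨C, rfl⟩ := CStarAlgebra.nonneg_iff_eq_star_mul_self.mp hB.nonneg
  have hps : (C * A * Cᴴ).PosSemidef := hA.mul_mul_conjTranspose_same _
  have : (A * (star C * C)).trace = (C * A * Cᴴ).trace := by
    rw [star_eq_conjTranspose, ← mul_assoc, Matrix.trace_mul_cycle]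
  rw [this]
  exact aux_trace_psd_nonneg hps

lemma aux_cyc {d : ℕ} (a b y : Matrix (Fin d) (Fin d) ℂ)
    (hbb : b * b = b) (hab : a * b = b) (hba : b * a = b) :
    ((a - b) * y * (a - b)).trace = (a * y * a).trace - (b * y * b).trace := by
  have h1 : (a * y * b).trace = (b * y).trace := by
    rw [Matrix.trace_mul_cycle, hba]
  have h2 : (b * y * a).trace = (b * y).trace := by
    rw [Matrix.trace_mul_cycle, hab]
  have h3 : (b * y * b).trace = (b * y).trace := by
    rw [Matrix.trace_mul_cycle, hbb]
  simp only [sub_mul, mul_sub, Matrix.trace_sub, h1, h2, h3]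
  ring

lemma aux_tele (g : ℕ → ℝ) : ∀ M, 2 ≤ M →
    ∑ n ∈ Finset.Icc 2 M, (g (n - 1) - g n) = g 1 - g M := by
  intro M hM
  induction M, hM using Nat.le_induction with
  | base => simp
  | succ M hM ih =>
    rw [Finset.sum_Icc_succ_top (by omega), ih]
    simp only [Nat.add_sub_cancel]
    ring

/-- Trace estimate of Lemma 3.7: for a finite positive martingale `(x_n)` with
Cuculescu projections `(q_n)` at level `λ`,
`Σ_{n=2}^N τ((q_{n-1}-q_n)(x_n-x_{n-1})(q_{n-1}-q_n))
  ≤ τ(q_1 x_1 q_1 - q_N x_N q_N) ≤ τ((q_1 - q_N) x_N)`. -/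
theorem stmt_18 {d : ℕ} (N : ℕ) (hN : 2 ≤ N)
    (S : ℕ → Subalgebra ℂ (Matrix (Fin d) (Fin d) ℂ))
    (E : ℕ → Matrix (Fin d) (Fin d) ℂ →ₗ[ℂ] Matrix (Fin d) (Fin d) ℂ)
    (x q : ℕ → Matrix (Fin d) (Fin d) ℂ) (l : ℝ) (hl : 0 < l)
    (hmono : ∀ n, S n ≤ S (n + 1))
    (hEmem : ∀ n a, E n a ∈ S n)
    (hEfix : ∀ n a, a ∈ S n → E n a = a)
    (hEtr : ∀ n a, Matrix.trace (E n a) = Matrix.trace a)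
    (hEmod : ∀ n a b c, a ∈ S n → b ∈ S n → E n (a * c * b) = a * E n c * b)
    (hpos : ∀ n, (x n).PosSemidef)
    (hmart : ∀ n ∈ Finset.Icc 2 N, E (n - 1) (x n) = x (n - 1))
    (hqmem : ∀ n, q n ∈ S n)
    (hqherm : ∀ n, (q n)ᴴ = q n) (hqidem : ∀ n, q n * q n = q n)
    (hqdec : ∀ n ∈ Finset.Icc 2 N, q n * q (n - 1) = q n)
    (hqcomm : ∀ n ∈ Finset.Icc 2 N, Commute (q n) (q (n - 1) * x n * q (n - 1)))
    (hqbdd : ∀ n ∈ Finset.Icc 2 N,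
      ((l : ℂ) • q (n - 1) - q (n - 1) * x (n - 1) * q (n - 1)).PosSemidef) :
    (∑ n ∈ Finset.Icc 2 N,
        (Matrix.trace ((q (n - 1) - q n) * (x n - x (n - 1)) *
          (q (n - 1) - q n))).re)
      ≤ (Matrix.trace (q 1 * x 1 * q 1 - q N * x N * q N)).re ∧
    (Matrix.trace (q 1 * x 1 * q 1 - q N * x N * q N)).re ≤
      (Matrix.trace ((q 1 - q N) * x N)).re := by
  -- monotonicity of the filtration
  have hSle : ∀ i j : ℕ, i ≤ j → S i ≤ S j := by
    intro i j hij
    induction hij with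
    | refl => exact le_rfl
    | step _ ih => exact ih.trans (hmono _)
  -- a * b = b version of hqdec
  have hab : ∀ n ∈ Finset.Icc 2 N, q (n - 1) * q n = q n := by
    intro n hn
    have h := congrArg conjTranspose (hqdec n hn)
    simpa [Matrix.conjTranspose_mul, hqherm] using h
  -- martingale trace identity
  have hmartr : ∀ n ∈ Finset.Icc 2 N, ∀ a : Matrix (Fin d) (Fin d) ℂ, a ∈ S (n - 1) →
      (a * x n).trace = (a * x (n - 1)).trace := by
    intro n hn a ha
    have h1 : (1 : Matrix (Fin d) (Fin d) ℂ) ∈ S (n - 1) := Subalgebra.one_mem _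
    calc (a * x n).trace = (a * x n * 1).trace := by rw [mul_one]
      _ = (E (n - 1) (a * x n * 1)).trace := (hEtr _ _).symm
      _ = (a * E (n - 1) (x n) * 1).trace := by rw [hEmod (n - 1) a 1 (x n) ha h1]
      _ = (a * x (n - 1)).trace := by rw [hmart n hn, mul_one]
  -- conjugated martingale trace identity
  have hmartc : ∀ n ∈ Finset.Icc 2 N,
      (q (n - 1) * x n * q (n - 1)).trace = (q (n - 1) * x (n - 1) * q (n - 1)).trace := by
    intro n hn
    have ha := hqmem (n - 1)
    calc (q (n - 1) * x n * q (n - 1)).trace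
        = (E (n - 1) (q (n - 1) * x n * q (n - 1))).trace := (hEtr _ _).symm
      _ = (q (n - 1) * E (n - 1) (x n) * q (n - 1)).trace := by
          rw [hEmod (n - 1) _ _ (x n) ha ha]
      _ = (q (n - 1) * x (n - 1) * q (n - 1)).trace := by rw [hmart n hn]
  -- the per-term inequality
  have main1 : ∀ n ∈ Finset.Icc 2 N,
      ((q (n - 1) - q n) * (x n - x (n - 1)) * (q (n - 1) - q n)).trace.re ≤
        (q (n - 1) * x (n - 1) * q (n - 1)).trace.re - (q n * x n * q n).trace.re := by
    intro n hn
    set a := q (n - 1) with ha_def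
    set b := q n with hb_def
    have haa : a * a = a := hqidem _
    have hbb : b * b = b := hqidem _
    have hba : b * a = b := hqdec n hn
    have hab' : a * b = b := hab n hn
    have hid1 := aux_cyc a b (x n) hbb hab' hba
    have hid2 := aux_cyc a b (x (n - 1)) hbb hab' hba
    have hmm := hmartc n hn
    -- key positivity: trace((a-b) * (a * x_{n-1} * a)) ≥ 0
    have hP : (a - b).PosSemidef := by
      have hherm : (a - b)ᴴ = a - b := by
        rw [Matrix.conjTranspose_sub, hqherm, hqherm]
      have hidem : (a - b) * (a - b) = a - b := by
        simp only [sub_mul, mul_sub, haa, hbb, hba, hab']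
        abel
      have : (a - b) = (a - b)ᴴ * (a - b) := by rw [hherm, hidem]
      rw [this]
      exact Matrix.posSemidef_conjTranspose_mul_self _
    have hQ : (a * x (n - 1) * a).PosSemidef := by
      have := (hpos (n - 1)).mul_mul_conjTranspose_same a
      rwa [hqherm] at this
    have hnn : 0 ≤ ((a - b) * (a * x (n - 1) * a)).trace := aux_trace_mul_nonneg hP hQ
    -- rewrite that trace as a difference
    have hdiff : ((a - b) * (a * x (n - 1) * a)).trace =
        (a * x (n - 1) * a).trace - (b * x (n - 1) * b).trace := by
      have e1 : a * (a * x (n - 1) * a) = a * x (n - 1) * a := by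
        rw [← mul_assoc, ← mul_assoc, haa]
      have e2 : (b * (a * x (n - 1) * a)).trace = (b * x (n - 1) * b).trace := by
        have : b * (a * x (n - 1) * a) = b * x (n - 1) * a := by
          rw [← mul_assoc, ← mul_assoc, hba]
        rw [this, Matrix.trace_mul_cycle, hab', Matrix.trace_mul_cycle, hbb]
      rw [sub_mul, Matrix.trace_sub, e1, e2]
    have hkey : (b * x (n - 1) * b).trace.re ≤ (a * x (n - 1) * a).trace.re := by
      have h0 : 0 ≤ ((a - b) * (a * x (n - 1) * a)).trace.re := by
        have := (Complex.le_def.mp hnn).1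
        simpa using this
      rw [hdiff, Complex.sub_re] at h0
      linarith
    -- expand the term
    have hexp : ((a - b) * (x n - x (n - 1)) * (a - b)).trace =
        ((a - b) * x n * (a - b)).trace - ((a - b) * x (n - 1) * (a - b)).trace := by
      rw [← Matrix.trace_sub]
      congr 1
      noncomm_ring
    rw [hexp, hid1, hid2, hmm]
    simp only [Complex.sub_re]
    linarith
  -- telescoping bound for the first inequality
  have first : (∑ n ∈ Finset.Icc 2 N,
      ((q (n - 1) - q n) * (x n - x (n - 1)) * (q (n - 1) - q n)).trace.re) ≤
      (q 1 * x 1 * q 1 - q N * x N * q N).trace.re := by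
    have hsum := Finset.sum_le_sum main1
    have htel := aux_tele (fun n => (q n * x n * q n).trace.re) N hN
    rw [htel] at hsum
    rw [Matrix.trace_sub, Complex.sub_re]
    exact hsum
  refine ⟨first, ?_⟩
  have hq1x : ∀ m, 1 ≤ m → m ≤ N → (q 1 * x m).trace = (q 1 * x 1).trace := by
    intro m h1 hm
    induction m with
    | zero => omega
    | succ k ih =>
      by_cases hk : k = 0
      · subst hk; rfl
      · have hk1 : 1 ≤ k := Nat.one_le_iff_ne_zero.mpr hk
        have hmem : (k + 1) ∈ Finset.Icc 2 N := Finset.mem_Icc.mpr ⟨by omega, hm⟩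
        have hq1S : q 1 ∈ S ((k + 1) - 1) := hSle 1 k hk1 (hqmem 1)
        have := hmartr (k + 1) hmem (q 1) hq1S
        simp only [Nat.add_sub_cancel] at this
        rw [this]
        exact ih hk1 (by omega)
  have e1 : (q 1 * x 1 * q 1).trace = (q 1 * x 1).trace := by
    rw [Matrix.trace_mul_cycle, hqidem]
  have eN : (q N * x N * q N).trace = (q N * x N).trace := by
    rw [Matrix.trace_mul_cycle, hqidem]
  have : (q 1 * x 1 * q 1 - q N * x N * q N).trace = ((q 1 - q N) * x N).trace := by
    rw [Matrix.trace_sub, e1, eN, ← hq1x N (by omega) le_rfl, sub_mul, Matrix.trace_sub]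
  rw [this]
end
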